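/- arXiv:2005.11263 — 2 statements merged into one kernel-verified Lean document; each statement's English description precedes it below -/
import Mathlib

section
/- For every a > 0 and c ∈ ℂ, ∫₀^∞ e^{-a x² - 2√a·c·x} Λ(√a·x + c) dx = -(1/(2√a)) Λ'(c), where Λ'(c) = 2cΛ(c) - 2/√π. -/
open MeasureTheory intervalIntegral Set Filter Topology

/-- The complex error function: path integral of `e^{-ξ²}` from `0` to `z`
along the straight line, times `2/√π`. -/
noncomputable def cerf (z : ℂ) : ℂ :=
  (2 / (Real.sqrt Real.pi : ℂ)) * ∫ s in (0:ℝ)..1, z * Complex.exp (-((s : ℂ) * z)^2)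

/-- `Λ(z) = e^{z²}(1 - erf z)`. -/
noncomputable def Lam (z : ℂ) : ℂ := Complex.exp (z^2) * (1 - cerf z)

lemma norm_cexp (w : ℂ) : ‖Complex.exp w‖ = Real.exp w.re := by
  rw [Complex.norm_exp]

lemma aux1 (t w : ℂ) : HasDerivAt (fun w : ℂ => w * Complex.exp (-(t*w)^2))
    ((1 - 2*t^2*w^2) * Complex.exp (-(t*w)^2)) w := by
  have h1 : HasDerivAt (fun w : ℂ => -(t*w)^2) (-(2*t^2*w)) w := by
    have := (((hasDerivAt_id w).const_mul t).pow 2).neg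
    refine this.congr_deriv (Eq.symm ?_)
    simp only [id_eq]; ring
  have h3 := (hasDerivAt_id w).mul h1.cexp
  refine h3.congr_deriv (Eq.symm ?_)
  simp only [id_eq]
  ring

lemma aux2 (z w : ℂ) : HasDerivAt (fun u : ℂ => u * Complex.exp (-(u*z)^2))
    ((1 - 2*w^2*z^2) * Complex.exp (-(w*z)^2)) w := by
  have h1 : HasDerivAt (fun u : ℂ => -(u*z)^2) (-(2*z^2*w)) w := by
    have := (((hasDerivAt_id w).mul_const z).pow 2).neg
    refine this.congr_deriv (Eq.symm ?_)
    simp only [id_eq]; ring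
  have h3 := (hasDerivAt_id w).mul h1.cexp
  refine h3.congr_deriv (Eq.symm ?_)
  simp only [id_eq]
  ring

lemma ftc_inner (z : ℂ) :
    ∫ s in (0:ℝ)..1, (1 - 2*(s:ℂ)^2*z^2) * Complex.exp (-((s:ℂ)*z)^2) = Complex.exp (-z^2) := by
  have hd : ∀ s ∈ uIcc (0:ℝ) 1, HasDerivAt (fun s : ℝ => (s:ℂ) * Complex.exp (-((s:ℂ)*z)^2))
      ((1 - 2*(s:ℂ)^2*z^2) * Complex.exp (-((s:ℂ)*z)^2)) s := by
    intro s _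
    exact (aux2 z (s:ℂ)).comp_ofReal
  have hcont : Continuous fun s : ℝ => (1 - 2*(s:ℂ)^2*z^2) * Complex.exp (-((s:ℂ)*z)^2) := by
    fun_prop
  rw [intervalIntegral.integral_eq_sub_of_hasDerivAt hd (hcont.intervalIntegrable 0 1)]
  norm_num

lemma hasDerivAt_cerf (z : ℂ) :
    HasDerivAt cerf (2 / (Real.sqrt Real.pi : ℂ) * Complex.exp (-z^2)) z := by
  have key : HasDerivAt (fun w : ℂ => ∫ s in (0:ℝ)..1, w * Complex.exp (-((s:ℂ)*w)^2))
      (Complex.exp (-z^2)) z := by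
    have main := intervalIntegral.hasDerivAt_integral_of_dominated_loc_of_deriv_le
      (F := fun (w : ℂ) (s : ℝ) => w * Complex.exp (-((s:ℂ)*w)^2))
      (F' := fun (w : ℂ) (s : ℝ) => (1 - 2*(s:ℂ)^2*w^2) * Complex.exp (-((s:ℂ)*w)^2))
      (x₀ := z) (a := 0) (b := 1) (μ := volume)
      (bound := fun _ => (1 + 2*(‖z‖+1)^2) * Real.exp ((‖z‖+1)^2))
      (Metric.ball_mem_nhds z one_pos) ?_ ?_ ?_ ?_ ?_ ?_
    · rw [ftc_inner z] at main
      exact main.2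
    · filter_upwards with w
      exact (Continuous.aestronglyMeasurable (by fun_prop)).restrict
    · exact (Continuous.intervalIntegrable (by fun_prop) _ _)
    · exact (Continuous.aestronglyMeasurable (by fun_prop)).restrict
    · filter_upwards with s hs w hw
      have hs' : 0 ≤ s ∧ s ≤ 1 := by
        rcases hs with ⟨h1, h2⟩
        constructor
        · simpa using h1.le
        · simpa using h2
      have hwz : ‖w‖ ≤ ‖z‖ + 1 := by
        have := mem_ball_iff_norm.mp hw
        have := norm_le_norm_add_norm_sub' w z
        have h2 : ‖w - z‖ ≤ 1 := (mem_ball_iff_norm.mp hw).le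
        calc ‖w‖ = ‖z + (w - z)‖ := by ring_nf
          _ ≤ ‖z‖ + ‖w - z‖ := norm_add_le _ _
          _ ≤ ‖z‖ + 1 := by linarith
      rw [norm_mul, norm_cexp]
      have hsn : ‖(s:ℂ)‖ ≤ 1 := by
        rw [Complex.norm_real, Real.norm_eq_abs, abs_of_nonneg hs'.1]; exact hs'.2
      have hb1 : ‖(1 : ℂ) - 2*(s:ℂ)^2*w^2‖ ≤ 1 + 2*(‖z‖+1)^2 := by
        calc ‖(1 : ℂ) - 2*(s:ℂ)^2*w^2‖ ≤ ‖(1:ℂ)‖ + ‖2*(s:ℂ)^2*w^2‖ := norm_sub_le _ _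
          _ = 1 + 2 * (‖(s:ℂ)‖^2 * ‖w‖^2) := by
              simp [norm_mul, norm_pow, mul_assoc]
          _ ≤ 1 + 2*(‖z‖+1)^2 := by
              have h0 : ‖(s:ℂ)‖^2 * ‖w‖^2 ≤ 1 * (‖z‖+1)^2 := by
                apply mul_le_mul
                · nlinarith [norm_nonneg (s:ℂ)]
                · nlinarith [norm_nonneg w]
                · positivity
                · norm_num
              nlinarith
      have hb2 : Real.exp (-((s:ℂ)*w)^2).re ≤ Real.exp ((‖z‖+1)^2) := by
        apply Real.exp_le_exp.mpr
        have : (-((s:ℂ)*w)^2).re ≤ ‖(-((s:ℂ)*w)^2 : ℂ)‖ := Complex.re_le_norm _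
        apply this.trans
        rw [norm_neg, norm_pow, norm_mul]
        have : (‖(s:ℂ)‖ * ‖w‖)^2 ≤ (1 * (‖z‖+1))^2 := by
          apply pow_le_pow_left₀ (by positivity)
          exact mul_le_mul hsn hwz (norm_nonneg _) (by norm_num)
        simpa using this
      exact mul_le_mul hb1 hb2 (Real.exp_pos _).le (by positivity)
    · exact intervalIntegrable_const
    · filter_upwards with s _ w _
      exact aux1 (s:ℂ) w
  have h2 := HasDerivAt.const_mul (2 / (Real.sqrt Real.pi : ℂ)) key
  exact h2


lemma integrable_linear_gauss (p q r : ℝ) :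
    Integrable (fun u : ℝ => (p + q*u) * Real.exp (-u^2 + r*u)) := by
  have h1 := (integrable_exp_neg_mul_sq (one_pos)).const_mul (p + q*r/2)
  have h2 := (integrable_mul_exp_neg_mul_sq (one_pos)).const_mul q
  have hA : Integrable (fun x : ℝ => ((p + q*r/2) + q*x) * Real.exp (-x^2)) := by
    have heq : (fun x : ℝ => ((p + q*r/2) + q*x) * Real.exp (-x^2))
        = fun x => (p + q*r/2) * Real.exp (-1*x^2) + q * (x * Real.exp (-1*x^2)) := by
      funext x; simp only [neg_mul, one_mul]; ring
    rw [heq]; exact h1.add h2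
  have hB := (hA.comp_sub_right (r/2)).const_mul (Real.exp (r^2/4))
  have heq2 : (fun u : ℝ => (p + q*u) * Real.exp (-u^2 + r*u))
      = fun u => Real.exp (r^2/4) * (((p + q*r/2) + q*(u - r/2)) * Real.exp (-(u - r/2)^2)) := by
    funext u
    rw [show Real.exp (r^2/4) * (((p + q*r/2) + q*(u - r/2)) * Real.exp (-(u - r/2)^2))
        = ((p + q*r/2) + q*(u - r/2)) * (Real.exp (r^2/4) * Real.exp (-(u-r/2)^2)) from by ring,
      ← Real.exp_add]
    have : r^2/4 + -(u - r/2)^2 = -u^2 + r*u := by ring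
    rw [this]
    ring
  rw [heq2]; exact hB

lemma norm_cexp' (w : ℂ) : ‖Complex.exp w‖ = Real.exp w.re := by
  rw [Complex.norm_exp]

lemma norm_exp_neg_sq (w : ℂ) : ‖Complex.exp (-w^2)‖ = Real.exp (w.im^2 - w.re^2) := by
  rw [norm_cexp']
  congr 1
  simp [pow_two, Complex.mul_re]

lemma aux3 (z w : ℂ) : HasDerivAt (fun w : ℂ => Complex.exp (-((z+w)^2)))
    (-(2*(z+w)) * Complex.exp (-((z+w)^2))) w := by
  have h1 : HasDerivAt (fun w : ℂ => -((z+w)^2)) (-(2*(z+w))) w := by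
    have := (((hasDerivAt_id w).const_add z).pow 2).neg
    refine this.congr_deriv (Eq.symm ?_)
    simp only [id_eq]; ring
  have h2 := h1.cexp
  refine h2.congr_deriv (Eq.symm ?_)
  ring

lemma aux3' (t w : ℂ) : HasDerivAt (fun w : ℂ => Complex.exp (-((w+t)^2)))
    (-(2*(w+t)) * Complex.exp (-((w+t)^2))) w := by
  have h1 : HasDerivAt (fun w : ℂ => -((w+t)^2)) (-(2*(w+t))) w := by
    have := (((hasDerivAt_id w).add_const t).pow 2).neg
    refine this.congr_deriv (Eq.symm ?_)
    simp only [id_eq]; ring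
  have h2 := h1.cexp
  refine h2.congr_deriv (Eq.symm ?_)
  ring

lemma integrableOn_gauss_shift (z : ℂ) :
    IntegrableOn (fun u : ℝ => Complex.exp (-((z+u)^2))) (Ioi 0) := by
  have hg := integrable_linear_gauss (Real.exp (z.im^2 - z.re^2)) 0 (-2*z.re)
  apply Integrable.integrableOn (μ := volume)
  apply Integrable.mono' (g := fun u => (Real.exp (z.im^2 - z.re^2) + 0*u) * Real.exp (-u^2 + (-2*z.re)*u)) hg
  · exact (Continuous.aestronglyMeasurable (by fun_prop))
  · filter_upwards with u
    rw [norm_exp_neg_sq]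
    have h1 : (z + (u:ℂ)).im = z.im := by simp
    have h2 : (z + (u:ℂ)).re = z.re + u := by simp
    rw [h1, h2, zero_mul, add_zero, ← Real.exp_add]
    apply Real.exp_le_exp.mpr
    nlinarith [sq_nonneg (z.re)]

lemma integrableOn_deriv_gauss_shift (z : ℂ) :
    IntegrableOn (fun u : ℝ => -(2*(z+(u:ℂ))) * Complex.exp (-((z+u)^2))) (Ioi 0) := by
  have hg := integrable_linear_gauss (2*‖z‖*Real.exp (z.im^2)) (2*Real.exp (z.im^2)) (-2*z.re)
  apply Integrable.mono' (hg.restrict (s := Ioi 0))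
  · exact (Continuous.aestronglyMeasurable (by fun_prop)).restrict
  · rw [ae_restrict_iff' measurableSet_Ioi]
    filter_upwards with u hu
    have hu' : (0:ℝ) ≤ u := (le_of_lt hu)
    rw [norm_mul, norm_neg, norm_mul, norm_exp_neg_sq]
    have h1 : (z + (u:ℂ)).im = z.im := by simp
    have h2 : (z + (u:ℂ)).re = z.re + u := by simp
    rw [h1, h2]
    have hzu : ‖z + (u:ℂ)‖ ≤ ‖z‖ + u := by
      refine (norm_add_le _ _).trans ?_
      simp [Complex.norm_real, abs_of_nonneg hu']
    have hexp : Real.exp (z.im^2 - (z.re + u)^2) ≤ Real.exp (z.im^2) * Real.exp (-u^2 + (-2*z.re)*u) := by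
      rw [← Real.exp_add]
      apply Real.exp_le_exp.mpr
      nlinarith [sq_nonneg z.re]
    have hn2 : ‖(2:ℂ)‖ = 2 := by norm_num
    rw [hn2]
    calc 2 * ‖z + (u:ℂ)‖ * Real.exp (z.im ^ 2 - (z.re + u) ^ 2)
        ≤ 2 * (‖z‖ + u) * (Real.exp (z.im^2) * Real.exp (-u^2 + (-2*z.re)*u)) := by
          apply mul_le_mul
          · linarith
          · exact hexp
          · positivity
          · positivity
      _ = (2*‖z‖*Real.exp (z.im^2) + 2*Real.exp (z.im^2)*u) * Real.exp (-u^2 + (-2*z.re)*u) := by ring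

lemma tendsto_gauss_shift (z : ℂ) :
    Tendsto (fun u : ℝ => Complex.exp (-((z+u)^2))) atTop (𝓝 0) := by
  rw [tendsto_zero_iff_norm_tendsto_zero]
  have hexp : Tendsto (fun u : ℝ => z.im^2 - (z.re+u)^2) atTop atBot := by
    apply Filter.tendsto_atBot.mpr
    intro b
    filter_upwards [Filter.eventually_ge_atTop (|z.re| + |z.im| + |b| + 1)] with u hu
    have h1 := le_abs_self z.re
    have h2 := neg_abs_le z.re
    have h3 := le_abs_self z.im
    have h4 := neg_abs_le z.im
    have h5 := le_abs_self b
    have h6 := abs_nonneg b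
    have key : |z.im| + |b| + 1 ≤ z.re + u := by linarith
    have hsq : (|z.im|+|b|+1)^2 ≤ (z.re+u)^2 := by
      apply pow_le_pow_left₀ (by positivity) key
    nlinarith [hsq, neg_abs_le b, abs_nonneg z.im, abs_nonneg b]
  have := Real.tendsto_exp_atBot.comp hexp
  apply Tendsto.congr' _ this
  filter_upwards with u
  rw [Function.comp_apply, norm_exp_neg_sq]
  congr 1 <;> simp

lemma integral_deriv_gauss_shift (z : ℂ) :
    ∫ u in Ioi (0:ℝ), -(2*(z+(u:ℂ))) * Complex.exp (-((z+u)^2)) = -Complex.exp (-z^2) := by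
  have hder : ∀ u ∈ Ioi (0:ℝ), HasDerivAt (fun u : ℝ => Complex.exp (-((z+u)^2)))
      (-(2*(z+(u:ℂ))) * Complex.exp (-((z+u)^2))) u := fun u _ => (aux3 z (u:ℂ)).comp_ofReal
  have hcont : ContinuousWithinAt (fun u : ℝ => Complex.exp (-((z+u)^2))) (Ici 0) 0 :=
    (Continuous.continuousWithinAt (by fun_prop))
  have := integral_Ioi_of_hasDerivAt_of_tendsto hcont hder
    (integrableOn_deriv_gauss_shift z) (tendsto_gauss_shift z)
  rw [this]
  norm_num

lemma hasDerivAt_hC (z : ℂ) :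
    HasDerivAt (fun w : ℂ => ∫ u in Ioi (0:ℝ), Complex.exp (-((w+u)^2)))
      (-Complex.exp (-z^2)) z := by
  set R := ‖z‖ + 1 with hR
  have hR1 : 1 ≤ R := by have := norm_nonneg z; rw [hR]; linarith
  have main := _root_.hasDerivAt_integral_of_dominated_loc_of_deriv_le
    (μ := volume.restrict (Ioi (0:ℝ)))
    (F := fun (w:ℂ) (u:ℝ) => Complex.exp (-((w+u)^2)))
    (F' := fun (w:ℂ) (u:ℝ) => -(2*(w+(u:ℂ))) * Complex.exp (-((w+u)^2)))
    (x₀ := z)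
    (bound := fun u => (2*R*Real.exp (R^2) + 2*Real.exp (R^2)*u) * Real.exp (-u^2 + (2*R)*u))
    (Metric.ball_mem_nhds z one_pos) ?_ ?_ ?_ ?_ ?_ ?_
  · rw [integral_deriv_gauss_shift z] at main
    exact main.2
  · filter_upwards with w
    exact (Continuous.aestronglyMeasurable (by fun_prop)).restrict
  · exact integrableOn_gauss_shift z
  · exact (Continuous.aestronglyMeasurable (by fun_prop)).restrict
  · rw [ae_restrict_iff' measurableSet_Ioi]
    filter_upwards with u hu w hw
    have hu' : (0:ℝ) ≤ u := le_of_lt hu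
    have hwz : ‖w‖ ≤ R := by
      have h2 : ‖w - z‖ ≤ 1 := (mem_ball_iff_norm.mp hw).le
      calc ‖w‖ = ‖z + (w - z)‖ := by ring_nf
        _ ≤ ‖z‖ + ‖w - z‖ := norm_add_le _ _
        _ ≤ R := by rw [hR]; linarith
    have hre : |w.re| ≤ R := (Complex.abs_re_le_norm w).trans hwz
    have him : |w.im| ≤ R := (Complex.abs_im_le_norm w).trans hwz
    rw [norm_mul, norm_neg, norm_mul, norm_exp_neg_sq]
    have h1 : (w + (u:ℂ)).im = w.im := by simp
    have h2 : (w + (u:ℂ)).re = w.re + u := by simp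
    rw [h1, h2]
    have hn2 : ‖(2:ℂ)‖ = 2 := by norm_num
    rw [hn2]
    have hzu : ‖w + (u:ℂ)‖ ≤ R + u := by
      refine (norm_add_le _ _).trans ?_
      have : ‖(u:ℂ)‖ = u := by simp [Complex.norm_real, abs_of_nonneg hu']
      rw [this]
      linarith
    have hexp : Real.exp (w.im^2 - (w.re + u)^2) ≤ Real.exp (R^2) * Real.exp (-u^2 + (2*R)*u) := by
      rw [← Real.exp_add]
      apply Real.exp_le_exp.mpr
      have hre' := abs_le.mp hre
      have him' := abs_le.mp him
      nlinarith [sq_nonneg w.re]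
    calc 2 * ‖w + (u:ℂ)‖ * Real.exp (w.im ^ 2 - (w.re + u) ^ 2)
        ≤ 2 * (R + u) * (Real.exp (R^2) * Real.exp (-u^2 + (2*R)*u)) := by
          apply mul_le_mul (by linarith) hexp (Real.exp_pos _).le (by positivity)
      _ = (2*R*Real.exp (R^2) + 2*Real.exp (R^2)*u) * Real.exp (-u^2 + (2*R)*u) := by ring
  · exact (integrable_linear_gauss _ _ _).restrict
  · rw [ae_restrict_iff' measurableSet_Ioi]
    filter_upwards with u _ w _
    exact aux3' (u:ℂ) w

lemma hC_zero : ∫ u in Ioi (0:ℝ), Complex.exp (-((u:ℂ)^2))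
    = ((Real.sqrt Real.pi / 2 : ℝ) : ℂ) := by
  have heq : ∀ u : ℝ, Complex.exp (-((u:ℂ)^2)) = ((Real.exp (-1*u^2) : ℝ) : ℂ) := by
    intro u
    rw [Complex.ofReal_exp]
    push_cast
    ring_nf
  simp_rw [heq]
  have h2 : ∫ u in Ioi (0:ℝ), ((Real.exp (-1*u^2) : ℝ) : ℂ)
      = ((∫ u in Ioi (0:ℝ), Real.exp (-1*u^2) : ℝ) : ℂ) := _root_.integral_ofReal
  rw [h2, integral_gaussian_Ioi]
  norm_num

lemma cerf_zero : cerf 0 = 0 := by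
  simp [cerf]

lemma cerf_add_hC (z : ℂ) :
    cerf z + (2 / (Real.sqrt Real.pi : ℂ)) * ∫ u in Ioi (0:ℝ), Complex.exp (-((z+u)^2)) = 1 := by
  set Φ : ℂ → ℂ := fun z =>
    cerf z + (2 / (Real.sqrt Real.pi : ℂ)) * ∫ u in Ioi (0:ℝ), Complex.exp (-((z+u)^2)) with hΦ
  have hder : ∀ w : ℂ, HasDerivAt Φ 0 w := by
    intro w
    have h := (hasDerivAt_cerf w).add (HasDerivAt.const_mul (2 / (Real.sqrt Real.pi : ℂ))
      (hasDerivAt_hC w))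
    refine h.congr_deriv (Eq.symm ?_)
    ring
  have hconst : Φ z = Φ 0 := by
    apply is_const_of_fderiv_eq_zero (𝕜 := ℂ) (fun w => (hder w).differentiableAt)
    intro w
    have hf := (hder w).hasFDerivAt
    rw [hf.fderiv]
    ext x
    simp
  have hπ : (Real.sqrt Real.pi : ℂ) ≠ 0 := by
    simp only [ne_eq, Complex.ofReal_eq_zero]
    positivity
  have h0 : Φ 0 = 1 := by
    rw [hΦ]
    simp only [cerf_zero, zero_add]
    rw [hC_zero, Complex.ofReal_div]
    field_simp; norm_num
  calc Φ z = Φ 0 := hconst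
    _ = 1 := h0

lemma Lam_eq (z : ℂ) : Lam z
    = (2 / (Real.sqrt Real.pi : ℂ)) * ∫ u in Ioi (0:ℝ), Complex.exp (-(u:ℂ)^2 - 2*z*u) := by
  have h := cerf_add_hC z
  have h1 : (1:ℂ) - cerf z
      = (2 / (Real.sqrt Real.pi : ℂ)) * ∫ u in Ioi (0:ℝ), Complex.exp (-((z+u)^2)) := by
    linear_combination -h
  unfold Lam
  rw [h1, ← mul_assoc, mul_comm (Complex.exp (z^2)), mul_assoc, ← MeasureTheory.integral_const_mul]
  congr 1
  apply MeasureTheory.integral_congr_ae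
  filter_upwards with u
  rw [← Complex.exp_add]
  congr 1
  ring

lemma Lam_norm_le_aux (M : ℝ) (hM : 0 ≤ M) (w : ℂ) (hw : -M ≤ 2*w.re) :
    ‖Lam w‖ ≤ (2 / Real.sqrt Real.pi) * ∫ u in Ioi (0:ℝ), Real.exp (-u^2 + M*u) := by
  rw [Lam_eq, norm_mul]
  have hπ : (0:ℝ) < Real.sqrt Real.pi := Real.sqrt_pos.mpr Real.pi_pos
  have h1 : ‖(2 / (Real.sqrt Real.pi : ℂ))‖ = 2 / Real.sqrt Real.pi := by
    rw [norm_div]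
    simp [Complex.norm_real, abs_of_nonneg hπ.le]
  rw [h1]
  apply mul_le_mul_of_nonneg_left _ (by positivity)
  refine (MeasureTheory.norm_integral_le_integral_norm _).trans ?_
  have hint1 : IntegrableOn (fun u : ℝ => ‖Complex.exp (-(u:ℂ)^2 - 2*w*u)‖) (Ioi 0) := by
    have h0 : IntegrableOn (fun u : ℝ => Complex.exp (-(u:ℂ)^2 - 2*w*u)) (Ioi 0) := by
      have h := (integrableOn_gauss_shift w).const_mul (Complex.exp (w^2))
      apply h.congr
      filter_upwards with u
      rw [← Complex.exp_add]
      congr 1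
      ring
    exact h0.norm
  have hint2 : IntegrableOn (fun u : ℝ => Real.exp (-u^2 + M*u)) (Ioi 0) := by
    have h := (integrable_linear_gauss 1 0 M).restrict (s := Ioi 0)
    apply h.congr
    filter_upwards with u
    ring
  apply setIntegral_mono_on hint1 hint2 measurableSet_Ioi
  intro u hu
  have hu' : (0:ℝ) ≤ u := le_of_lt hu
  rw [norm_cexp']
  apply Real.exp_le_exp.mpr
  have : (-(u:ℂ)^2 - 2*w*u).re = -u^2 - 2*w.re*u := by
    simp [Complex.sub_re, Complex.mul_re, pow_two]
  rw [this]
  nlinarith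

lemma gauss_zero_val : ∫ u in Ioi (0:ℝ), Real.exp (-u^2 + 0*u) = Real.sqrt Real.pi / 2 := by
  have : ∀ u : ℝ, Real.exp (-u^2 + 0*u) = Real.exp (-1*u^2) := by
    intro u; norm_num
  simp_rw [this]
  rw [integral_gaussian_Ioi]
  norm_num

lemma Lam_norm_le_one (w : ℂ) (hw : 0 ≤ w.re) : ‖Lam w‖ ≤ 1 := by
  have := Lam_norm_le_aux 0 le_rfl w (by linarith)
  rw [gauss_zero_val] at this
  have hπ : (0:ℝ) < Real.sqrt Real.pi := Real.sqrt_pos.mpr Real.pi_pos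
  calc ‖Lam w‖ ≤ (2 / Real.sqrt Real.pi) * (Real.sqrt Real.pi / 2) := this
    _ = 1 := by field_simp

lemma hasDerivAt_Lam (z : ℂ) :
    HasDerivAt Lam (2*z*Lam z - 2 / (Real.sqrt Real.pi : ℂ)) z := by
  have h1 : HasDerivAt (fun z : ℂ => Complex.exp (z^2)) (Complex.exp (z^2) * (2*z)) z := by
    have := (hasDerivAt_pow 2 z).cexp
    refine this.congr_deriv (Eq.symm ?_)
    ring_nf
  have h2 : HasDerivAt (fun z : ℂ => 1 - cerf z)
      (-(2 / (Real.sqrt Real.pi : ℂ) * Complex.exp (-z^2))) z := (hasDerivAt_cerf z).const_sub 1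
  have h3 := h1.mul h2
  have hee : Complex.exp (z^2) * Complex.exp (-z^2) = 1 := by
    rw [← Complex.exp_add]
    simp
  have : HasDerivAt (fun z : ℂ => Complex.exp (z^2) * (1 - cerf z))
      (2*z*Lam z - 2 / (Real.sqrt Real.pi : ℂ)) z := by
    refine h3.congr_deriv (Eq.symm ?_)
    unfold Lam
    linear_combination (2 / (Real.sqrt Real.pi : ℂ)) * hee
  exact this

lemma continuous_Lam : Continuous Lam :=
  continuous_iff_continuousAt.mpr fun z => (hasDerivAt_Lam z).continuousAt

lemma integrable_gauss_lin (a r : ℝ) (ha : 0 < a) :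
    Integrable (fun x : ℝ => Real.exp (-a*x^2 + r*x)) := by
  have h := ((integrable_exp_neg_mul_sq ha).comp_sub_right (r/(2*a))).const_mul
    (Real.exp (r^2/(4*a)))
  apply h.congr
  filter_upwards with x
  rw [← Real.exp_add]
  congr 1
  field_simp
  ring

noncomputable def Gaux (c w : ℂ) : ℂ :=
  Complex.exp (c^2 - w^2) * (2*w*Lam w - 2/(Real.sqrt Real.pi : ℂ))

lemma hasDerivAt_Gaux (c w : ℂ) :
    HasDerivAt (Gaux c) (2 * Complex.exp (c^2 - w^2) * Lam w) w := by
  have h1 : HasDerivAt (fun w : ℂ => c^2 - w^2) (-(2*w)) w := by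
    have := (hasDerivAt_pow 2 w).const_sub (c^2)
    refine this.congr_deriv (Eq.symm ?_)
    push_cast
    ring
  have hE := h1.cexp
  have h2 : HasDerivAt (fun w : ℂ => 2*w*Lam w - 2/(Real.sqrt Real.pi : ℂ))
      (2 * Lam w + (2*w) * (2*w*Lam w - 2/(Real.sqrt Real.pi : ℂ))) w := by
    have hmul := (((hasDerivAt_id w).const_mul 2).mul (hasDerivAt_Lam w)).sub_const
      (2/(Real.sqrt Real.pi : ℂ))
    refine hmul.congr_deriv (Eq.symm ?_)
    simp only [id_eq]
    ring
  have h3 := hE.mul h2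
  have heq : (fun w : ℂ => Complex.exp (c^2 - w^2) * (2*w*Lam w - 2/(Real.sqrt Real.pi : ℂ)))
      = Gaux c := rfl
  change HasDerivAt (Gaux c) _ w at h3
  refine h3.congr_deriv (Eq.symm ?_)
  ring

lemma continuous_Gaux (c : ℂ) : Continuous (Gaux c) := by
  unfold Gaux
  exact (Complex.continuous_exp.comp (by fun_prop)).mul
    (((continuous_const.mul continuous_id).mul continuous_Lam).sub continuous_const)

theorem gaussian_integral_Lam_degenerate (a : ℝ) (ha : 0 < a) (c : ℂ) :
    ∫ x in Set.Ioi (0:ℝ),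
        Complex.exp (-(a:ℂ) * (x:ℂ)^2 - 2 * (Real.sqrt a : ℂ) * c * (x:ℂ)) *
          Lam ((Real.sqrt a : ℂ) * (x:ℂ) + c) =
      -(1 / (2 * (Real.sqrt a : ℂ))) * (2 * c * Lam c - 2 / (Real.sqrt Real.pi : ℂ)) := by
  set sa := Real.sqrt a with hsa
  have hsa0 : 0 < sa := Real.sqrt_pos.mpr ha
  set s : ℂ := (sa : ℂ) with hs
  have hs0 : s ≠ 0 := by
    simp only [hs, ne_eq, Complex.ofReal_eq_zero]
    exact hsa0.ne'
  have hs2 : s^2 = (a:ℂ) := by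
    rw [hs, ← Complex.ofReal_pow, Real.sq_sqrt ha.le]
  have hπ : (0:ℝ) < Real.sqrt Real.pi := Real.sqrt_pos.mpr Real.pi_pos
  have hπc : (Real.sqrt Real.pi : ℂ) ≠ 0 := by
    simp only [ne_eq, Complex.ofReal_eq_zero]; exact hπ.ne'
  set F : ℝ → ℂ := fun x => (1/(2*s)) * Gaux c (s*(x:ℂ)+c) with hF
  have hArg : ∀ x : ℝ, c^2 - (s*(x:ℂ)+c)^2 = -(a:ℂ)*(x:ℂ)^2 - 2*s*c*(x:ℂ) := by
    intro x
    rw [← hs2]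
    ring
  -- derivative
  have hder : ∀ x ∈ Ioi (0:ℝ), HasDerivAt F
      (Complex.exp (-(a:ℂ)*(x:ℂ)^2 - 2*s*c*(x:ℂ)) * Lam (s*(x:ℂ)+c)) x := by
    intro x _
    have hq : HasDerivAt (fun w : ℂ => s*w+c) s (x:ℂ) := by
      simpa using ((hasDerivAt_id (x:ℂ)).const_mul s).add_const c
    have hcomp := ((hasDerivAt_Gaux c (s*(x:ℂ)+c)).comp (x:ℂ) hq).comp_ofReal
    have hc2 := hcomp.const_mul (1/(2*s))
    refine hc2.congr_deriv (Eq.symm ?_)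
    rw [← hArg x]
    field_simp
  -- integrability of the derivative
  have hM : ∀ x : ℝ, 0 < x → ‖Lam (s*(x:ℂ)+c)‖ ≤
      (2 / Real.sqrt Real.pi) * ∫ u in Ioi (0:ℝ), Real.exp (-u^2 + (max 0 (-2*c.re))*u) := by
    intro x hx
    apply Lam_norm_le_aux _ (le_max_left _ _)
    have hre : (s*(x:ℂ)+c).re = sa*x + c.re := by
      simp [hs]
    rw [hre]
    have h1 : -2*c.re ≤ max 0 (-2*c.re) := le_max_right _ _
    nlinarith [mul_pos hsa0 hx]
  set CM : ℝ := (2 / Real.sqrt Real.pi) * ∫ u in Ioi (0:ℝ),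
    Real.exp (-u^2 + (max 0 (-2*c.re))*u) with hCM
  have hint : IntegrableOn
      (fun x : ℝ => Complex.exp (-(a:ℂ)*(x:ℂ)^2 - 2*s*c*(x:ℂ)) * Lam (s*(x:ℂ)+c)) (Ioi 0) := by
    apply Integrable.mono'
      (g := fun x : ℝ => CM * Real.exp (-a*x^2 + (-2*sa*c.re)*x))
      (((integrable_gauss_lin a (-2*sa*c.re) ha).const_mul CM).restrict)
    · apply Continuous.aestronglyMeasurable ?_ |>.restrict
      exact (Complex.continuous_exp.comp (by fun_prop)).mul (continuous_Lam.comp (by fun_prop))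
    · rw [ae_restrict_iff' measurableSet_Ioi]
      filter_upwards with x hx
      rw [norm_mul, norm_cexp']
      have hre2 : (-(a:ℂ)*(x:ℂ)^2 - 2*s*c*(x:ℂ)).re = -a*x^2 + (-2*sa*c.re)*x := by
        simp [hs, Complex.mul_re, Complex.sub_re, pow_two]
        ring
      rw [hre2]
      have h1 := hM x hx
      calc Real.exp (-a*x^2 + (-2*sa*c.re)*x) * ‖Lam (s*(x:ℂ)+c)‖
          ≤ Real.exp (-a*x^2 + (-2*sa*c.re)*x) * CM := by
            apply mul_le_mul_of_nonneg_left h1 (Real.exp_pos _).le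
        _ = CM * Real.exp (-a*x^2 + (-2*sa*c.re)*x) := by ring
  -- limit at infinity
  have htend : Tendsto F atTop (𝓝 0) := by
    set K : ℝ := (‖c‖ + 1/Real.sqrt Real.pi)/sa with hK
    have hK0 : 0 ≤ K := by positivity
    apply squeeze_zero_norm' (a := fun x : ℝ => x^2 * Real.exp (-x))
    · filter_upwards [eventually_ge_atTop (1:ℝ), eventually_ge_atTop ((1 - c.re)/sa),
        eventually_ge_atTop ((1 + 2*sa*|c.re|)/a), eventually_ge_atTop (1 + K)] with x hx1 hx2 hx3 hx4
      have hx0 : (0:ℝ) ≤ x := by linarith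
      have hre1 : 1 ≤ sa*x + c.re := by
        rw [div_le_iff₀ hsa0] at hx2
        nlinarith
      have hax : 1 + 2*sa*|c.re| ≤ a*x := by
        rw [div_le_iff₀ ha] at hx3
        nlinarith
      have hiii : x ≤ a*x^2 + 2*sa*c.re*x := by
        nlinarith [mul_le_mul_of_nonneg_right hax hx0, neg_abs_le c.re,
          mul_nonneg (mul_nonneg (by norm_num : (0:ℝ) ≤ 2) hsa0.le) hx0]
      have hiv : x + K ≤ x^2 := by nlinarith
      have hw : (s*(x:ℂ)+c).re = sa*x + c.re := by simp [hs]
      have hnorm1 : ‖(1:ℂ)/(2*s)‖ = 1/(2*sa) := by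
        rw [hs]
        rw [show (1:ℂ)/(2*(sa:ℂ)) = (((1/(2*sa) : ℝ)):ℂ) from by push_cast; ring]
        rw [Complex.norm_real, Real.norm_eq_abs, abs_of_pos (by positivity)]
      have hnormw : ‖s*(x:ℂ)+c‖ ≤ sa*x + ‖c‖ := by
        refine (norm_add_le _ _).trans ?_
        have : ‖s*(x:ℂ)‖ = sa*x := by
          rw [hs, ← Complex.ofReal_mul, Complex.norm_real, Real.norm_eq_abs,
            abs_of_nonneg (by positivity)]
        rw [this]
      have hLam1 : ‖Lam (s*(x:ℂ)+c)‖ ≤ 1 := by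
        apply Lam_norm_le_one
        rw [hw]; linarith
      have hreexp : (c^2 - (s*(x:ℂ)+c)^2).re = -(a*x^2 + 2*sa*c.re*x) := by
        rw [hArg x]
        simp [hs, Complex.mul_re, Complex.sub_re, pow_two]
        ring
      have hGnorm : ‖Gaux c (s*(x:ℂ)+c)‖ ≤
          Real.exp (-(a*x^2 + 2*sa*c.re*x)) * (2*(sa*x+‖c‖) + 2/Real.sqrt Real.pi) := by
        unfold Gaux
        rw [norm_mul, norm_cexp', hreexp]
        apply mul_le_mul_of_nonneg_left _ (Real.exp_pos _).le
        refine (norm_sub_le _ _).trans ?_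
        have e1 : ‖2*(s*(x:ℂ)+c)*Lam (s*(x:ℂ)+c)‖ ≤ 2*(sa*x+‖c‖) := by
          rw [norm_mul, norm_mul]
          have h2 : ‖(2:ℂ)‖ = 2 := by norm_num
          rw [h2]
          calc 2 * ‖s*(x:ℂ)+c‖ * ‖Lam (s*(x:ℂ)+c)‖
              ≤ 2 * (sa*x+‖c‖) * 1 := by
                apply mul_le_mul (by linarith) hLam1 (norm_nonneg _) (by positivity)
            _ = 2*(sa*x+‖c‖) := by ring
        have e2 : ‖(2:ℂ)/(Real.sqrt Real.pi : ℂ)‖ = 2/Real.sqrt Real.pi := by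
          rw [norm_div]
          simp [Complex.norm_real, abs_of_nonneg hπ.le]
        linarith [e1, e2.le]
      rw [hF]
      simp only [norm_mul]
      rw [hnorm1]
      calc (1/(2*sa)) * ‖Gaux c (s*(x:ℂ)+c)‖
          ≤ (1/(2*sa)) * (Real.exp (-(a*x^2 + 2*sa*c.re*x)) * (2*(sa*x+‖c‖) + 2/Real.sqrt Real.pi)) := by
            apply mul_le_mul_of_nonneg_left hGnorm (by positivity)
        _ = (x + K) * Real.exp (-(a*x^2 + 2*sa*c.re*x)) := by
            rw [hK]
            field_simp
            ring
        _ ≤ x^2 * Real.exp (-x) := by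
            apply mul_le_mul hiv (Real.exp_le_exp.mpr (by linarith)) (Real.exp_pos _).le
              (by positivity)
    · simpa using Real.tendsto_pow_mul_exp_neg_atTop_nhds_zero 2
  -- continuity at 0
  have hcontF : Continuous F := by
    rw [hF]
    exact continuous_const.mul ((continuous_Gaux c).comp (by fun_prop))
  have hmain := integral_Ioi_of_hasDerivAt_of_tendsto
    (hcontF.continuousWithinAt) hder hint htend
  have hF0 : F 0 = (1/(2*s)) * (2*c*Lam c - 2/(Real.sqrt Real.pi : ℂ)) := by
    rw [hF]
    simp only [Complex.ofReal_zero, mul_zero, zero_add]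
    unfold Gaux
    simp
  have hgoal : ∫ x in Ioi (0:ℝ),
      Complex.exp (-(a:ℂ)*(x:ℂ)^2 - 2*s*c*(x:ℂ)) * Lam (s*(x:ℂ)+c)
      = -(1 / (2 * s)) * (2 * c * Lam c - 2 / (Real.sqrt Real.pi : ℂ)) := by
    rw [hmain, hF0]
    ring
  convert hgoal using 2 <;> ring
end

section
/- Let F be holomorphic near the sector S_α (0 < α < π/2) with |F(z)| ≤ A e^{B Im(z)} on S_α, and define Ψ₀(t,x;F) = e^{iα} ∫₀^∞ G₀(t,x,ye^{iα}) F(ye^{iα}) dy with G₀(t,x,z) = (1/(2√(iπt))) e^{-(|x|+z)²/(4it)}. Then |Ψ₀(t,x;F)| ≤ A (√π/(2√(sin 2α))) Λ((|x|/(2√t) - B√t)·√(tan(α)/2)), and consequently Ψ₀(t,x;F) → 0 as t → 0⁺ for each fixed x ≠ 0. -/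
open MeasureTheory intervalIntegral Set Filter Topology

/-- The sector `S_α = {z : z = 0 ∨ 0 ≤ Arg z ≤ α}`. -/
def sector (α : ℝ) : Set ℂ := {z : ℂ | z = 0 ∨ (0 ≤ z.arg ∧ z.arg ≤ α)}
/-- `√(it) = e^{iπ/4}√t` for `t > 0`. -/
noncomputable def sqit (t : ℝ) : ℂ :=
  Complex.exp (Real.pi / 4 * Complex.I) * (Real.sqrt t : ℂ)

/-- `√(iπt) = e^{iπ/4}√(πt)` for `t > 0`. -/
noncomputable def sqipt (t : ℝ) : ℂ :=
  Complex.exp (Real.pi / 4 * Complex.I) * (Real.sqrt (Real.pi * t) : ℂ)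

/-- The free Schrödinger kernel. -/
noncomputable def Gfree (t x : ℝ) (z : ℂ) : ℂ :=
  (2 * sqipt t)⁻¹ * Complex.exp (-((x : ℂ) - z)^2 / (4 * Complex.I * (t : ℂ)))

/-- The kernel `G₀`. -/
noncomputable def G0 (t x : ℝ) (z : ℂ) : ℂ :=
  (2 * sqipt t)⁻¹ * Complex.exp (-(((|x| : ℝ) : ℂ) + z)^2 / (4 * Complex.I * (t : ℂ)))

/-- The kernel `G₁` with parameter `ω`. -/
noncomputable def G1 (ω : ℝ) (t x : ℝ) (z : ℂ) : ℂ :=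
  Lam ((((|x| : ℝ) : ℂ) + z) / (2 * sqit t) + (ω : ℂ) * sqit t) *
    Complex.exp (-(((|x| : ℝ) : ℂ) + z)^2 / (4 * Complex.I * (t : ℂ)))


private lemma exp_neg_sq_integrable : Integrable (fun v : ℝ => Real.exp (-v^2)) := by
  simpa using integrable_exp_neg_mul_sq one_pos

private lemma integral_exp_neg_sq : ∫ v : ℝ, Real.exp (-v^2) = Real.sqrt Real.pi := by
  simpa using integral_gaussian 1

private lemma integral_Ioi_zero_exp_neg_sq :
    ∫ v in Set.Ioi (0:ℝ), Real.exp (-v^2) = Real.sqrt Real.pi / 2 := by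
  simpa using integral_gaussian_Ioi 1

private lemma interval_int_exp_neg_sq (w : ℝ) :
    ∫ u in (0:ℝ)..w, Real.exp (-u^2)
      = Real.sqrt Real.pi / 2 - ∫ v in Set.Ioi w, Real.exp (-v^2) := by
  have hIic : ∀ c : ℝ, (∫ v in Set.Iic c, Real.exp (-v^2))
      = Real.sqrt Real.pi - ∫ v in Set.Ioi c, Real.exp (-v^2) := by
    intro c
    have := integral_Iic_add_Ioi (b := c) exp_neg_sq_integrable.integrableOn
      exp_neg_sq_integrable.integrableOn
    rw [integral_exp_neg_sq] at this
    linarith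
  rw [← integral_Iic_sub_Iic exp_neg_sq_integrable.integrableOn
      exp_neg_sq_integrable.integrableOn, hIic, hIic, integral_Ioi_zero_exp_neg_sq]
  ring

private lemma lam_re (w : ℝ) :
    (Lam (w:ℂ)).re
      = Real.exp (w^2) * ((2/Real.sqrt Real.pi) * ∫ v in Set.Ioi w, Real.exp (-v^2)) := by
  have hπ : (0:ℝ) < Real.sqrt Real.pi := Real.sqrt_pos.mpr Real.pi_pos
  have hcast : ∀ s : ℝ, (w:ℂ) * Complex.exp (-((s:ℂ)*(w:ℂ))^2)
      = ((w * Real.exp (-(s*w)^2) : ℝ) : ℂ) := by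
    intro s; push_cast; ring_nf
  have hr : cerf (w:ℂ)
      = (((2/Real.sqrt Real.pi) * ∫ s in (0:ℝ)..1, w * Real.exp (-(s*w)^2) : ℝ) : ℂ) := by
    unfold cerf
    rw [intervalIntegral.integral_congr (g := fun s : ℝ => ((w * Real.exp (-(s*w)^2) : ℝ) : ℂ))
      (fun s _ => hcast s)]
    rw [intervalIntegral.integral_ofReal]
    push_cast
    ring
  have hval : (∫ s in (0:ℝ)..1, w * Real.exp (-(s*w)^2))
      = Real.sqrt Real.pi / 2 - ∫ v in Set.Ioi w, Real.exp (-v^2) := by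
    rcases eq_or_ne w 0 with h0 | hw
    · subst h0
      simp [integral_Ioi_zero_exp_neg_sq]
    · have h1 : (∫ s in (0:ℝ)..1, w * Real.exp (-(s*w)^2))
          = w * ∫ s in (0:ℝ)..1, Real.exp (-(w*s)^2) := by
        rw [intervalIntegral.integral_const_mul]
        congr 1
        exact intervalIntegral.integral_congr fun s _ => by rw [mul_comm]
      have h2 := intervalIntegral.integral_comp_mul_left (fun u : ℝ => Real.exp (-u^2)) hw
        (a := 0) (b := 1)
      simp only [mul_zero, mul_one, smul_eq_mul] at h2
      rw [h1, h2, ← mul_assoc, mul_inv_cancel₀ hw, one_mul, interval_int_exp_neg_sq]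
  have hLam : Lam (w:ℂ)
      = ((Real.exp (w^2) * (1 - (2/Real.sqrt Real.pi) *
          (Real.sqrt Real.pi / 2 - ∫ v in Set.Ioi w, Real.exp (-v^2))) : ℝ) : ℂ) := by
    rw [Lam, hr, hval]
    push_cast
    ring
  rw [hLam, Complex.ofReal_re]
  congr 1
  field_simp
  ring



private lemma gauss_sq_identity {a : ℝ} (ha : 0 < a) (b y : ℝ) :
    -a*y^2 - b*y = (b/(2*Real.sqrt a))^2 - (Real.sqrt a * y + b/(2*Real.sqrt a))^2 := by
  have h' : Real.sqrt a ^ 2 = a := Real.sq_sqrt ha.le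
  have hs : Real.sqrt a ≠ 0 := by positivity
  have h2 : 2 * Real.sqrt a * (b/(2*Real.sqrt a)) = b := by field_simp
  linear_combination y^2 * h' + y * h2

private lemma gauss_integrable {a : ℝ} (ha : 0 < a) (b : ℝ) :
    Integrable (fun y : ℝ => Real.exp (-a*y^2 - b*y)) := by
  have hsp : 0 < Real.sqrt a := Real.sqrt_pos.mpr ha
  have h1 : Integrable (fun y : ℝ => Real.exp (-(y + b/(2*Real.sqrt a))^2)) :=
    exp_neg_sq_integrable.comp_add_right _
  have h2 : Integrable (fun y : ℝ => Real.exp (-(Real.sqrt a * y + b/(2*Real.sqrt a))^2)) :=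
    h1.comp_mul_left' hsp.ne'
  refine (h2.const_mul (Real.exp ((b/(2*Real.sqrt a))^2))).congr (ae_of_all _ fun y => ?_)
  simp only [← Real.exp_add, ← sub_eq_add_neg, ← gauss_sq_identity ha]

private lemma gauss_integral {a : ℝ} (ha : 0 < a) (b : ℝ) :
    ∫ y in Set.Ioi (0:ℝ), Real.exp (-a*y^2 - b*y) =
      Real.exp ((b/(2*Real.sqrt a))^2) * ((Real.sqrt a)⁻¹ *
        ∫ v in Set.Ioi (b/(2*Real.sqrt a)), Real.exp (-v^2)) := by
  have hsp : 0 < Real.sqrt a := Real.sqrt_pos.mpr ha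
  set w := b/(2*Real.sqrt a) with hwdef
  have h1 : ∀ y : ℝ, Real.exp (-a*y^2 - b*y)
      = Real.exp (w^2) * Real.exp (-(Real.sqrt a * y + w)^2) := fun y => by
    rw [← Real.exp_add, ← sub_eq_add_neg, ← gauss_sq_identity ha]
  simp only [h1]
  rw [MeasureTheory.integral_const_mul]
  congr 1
  have h2 := integral_comp_mul_left_Ioi (fun u => Real.exp (-(u+w)^2)) 0 hsp
  simp only [mul_zero, smul_eq_mul] at h2
  rw [h2]
  congr 1
  have h3 := (measurePreserving_add_right volume w).setIntegral_preimage_emb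
      (MeasurableEquiv.addRight w).measurableEmbedding (fun v => Real.exp (-v^2)) (Set.Ioi w)
  simpa using h3


-- membership of ray in sector
private lemma ray_mem_sector {α : ℝ} (hα : α ∈ Set.Ioo 0 (Real.pi / 2)) {y : ℝ} (hy : 0 ≤ y) :
    (y : ℂ) * Complex.exp (α * Complex.I) ∈ sector α := by
  rcases eq_or_lt_of_le hy with h0 | hy'
  · left; simp [← h0]
  · right
    have harg : ((y : ℂ) * Complex.exp (α * Complex.I)).arg = α := by
      rw [Complex.exp_mul_I, Complex.arg_real_mul _ hy']
      exact Complex.arg_cos_add_sin_mul_I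
        ⟨by nlinarith [Real.pi_pos, hα.1], by linarith [hα.2, Real.pi_pos]⟩
    rw [harg]
    exact ⟨hα.1.le, le_refl _⟩

private lemma ray_im {α : ℝ} (y : ℝ) :
    ((y : ℂ) * Complex.exp ((α:ℝ) * Complex.I)).im = y * Real.sin α := by
  simp [Complex.exp_ofReal_mul_I_im, Complex.mul_im]

private lemma ray_re {α : ℝ} (y : ℝ) :
    ((y : ℂ) * Complex.exp ((α:ℝ) * Complex.I)).re = y * Real.cos α := by
  simp [Complex.exp_ofReal_mul_I_re, Complex.mul_re]

private lemma exponent_re {t x : ℝ} (ht : 0 < t) {α : ℝ} (y : ℝ) :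
    ((-(((|x| : ℝ) : ℂ) + (y : ℂ) * Complex.exp ((α:ℝ) * Complex.I))^2
      / (4 * Complex.I * (t : ℂ))).re)
    = -((|x| + y * Real.cos α) * (y * Real.sin α)) / (2 * t) := by
  set z : ℂ := ((|x| : ℝ) : ℂ) + (y : ℂ) * Complex.exp ((α:ℝ) * Complex.I) with hz
  have hzre : z.re = |x| + y * Real.cos α := by
    simp [hz, ray_re]
  have hzim : z.im = y * Real.sin α := by
    simp [hz, ray_im]
  have ht' : (t:ℝ) ≠ 0 := ht.ne'
  rw [Complex.div_re]
  simp [Complex.normSq_apply, Complex.mul_re, Complex.mul_im, pow_two, Complex.neg_re,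
    Complex.neg_im, hzre, hzim]
  field_simp
  ring

private lemma abs_sqipt {t : ℝ} (ht : 0 < t) :
    ‖2 * sqipt t‖ = 2 * Real.sqrt (Real.pi * t) := by
  have : (0:ℝ) ≤ Real.sqrt (Real.pi * t) := Real.sqrt_nonneg _
  simp [sqipt, Complex.norm_exp, this, abs_of_nonneg]

private lemma abs_G0 {t x : ℝ} (ht : 0 < t) {α : ℝ} (y : ℝ) :
    ‖G0 t x ((y : ℂ) * Complex.exp ((α:ℝ) * Complex.I))‖
      = (2 * Real.sqrt (Real.pi * t))⁻¹ *
        Real.exp (-((|x| + y * Real.cos α) * (y * Real.sin α)) / (2 * t)) := by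
  rw [G0, norm_mul, norm_inv, abs_sqipt ht, Complex.norm_exp, exponent_re ht]

private lemma pointwise_bound {α : ℝ} (hα : α ∈ Set.Ioo 0 (Real.pi / 2))
    {F : ℂ → ℂ} {A B : ℝ} (hA : 0 ≤ A)
    (hbound : ∀ z ∈ sector α, ‖F z‖ ≤ A * Real.exp (B * z.im))
    {t : ℝ} (x : ℝ) (ht : 0 < t) {y : ℝ} (hy : 0 ≤ y) :
    ‖G0 t x ((y : ℂ) * Complex.exp ((α:ℝ) * Complex.I)) *
        F ((y : ℂ) * Complex.exp ((α:ℝ) * Complex.I))‖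
      ≤ A * (2 * Real.sqrt (Real.pi * t))⁻¹ *
        Real.exp (-(Real.sin (2*α)/(4*t)) * y^2 - (Real.sin α * (|x|/(2*t) - B)) * y) := by
  have hF := hbound _ (ray_mem_sector hα hy)
  rw [ray_im] at hF
  rw [norm_mul, abs_G0 ht]
  calc (2 * Real.sqrt (Real.pi * t))⁻¹ *
        Real.exp (-((|x| + y * Real.cos α) * (y * Real.sin α)) / (2 * t)) *
        ‖F ((y : ℂ) * Complex.exp ((α:ℝ) * Complex.I))‖
      ≤ (2 * Real.sqrt (Real.pi * t))⁻¹ *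
        Real.exp (-((|x| + y * Real.cos α) * (y * Real.sin α)) / (2 * t)) *
        (A * Real.exp (B * (y * Real.sin α))) :=
        mul_le_mul_of_nonneg_left hF (by positivity)
    _ = A * (2 * Real.sqrt (Real.pi * t))⁻¹ *
        Real.exp (-(Real.sin (2*α)/(4*t)) * y^2 - (Real.sin α * (|x|/(2*t) - B)) * y) := by
        have hE : -((|x| + y * Real.cos α) * (y * Real.sin α)) / (2 * t) + B * (y * Real.sin α)
            = -(Real.sin (2*α)/(4*t)) * y^2 - (Real.sin α * (|x|/(2*t) - B)) * y := by
          rw [Real.sin_two_mul]; field_simp; ring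
        rw [← hE, Real.exp_add]
        ring

private lemma key_bound {α : ℝ} (hα : α ∈ Set.Ioo 0 (Real.pi / 2))
    {F : ℂ → ℂ} {A B : ℝ} (hA : 0 ≤ A)
    (hbound : ∀ z ∈ sector α, ‖F z‖ ≤ A * Real.exp (B * z.im))
    {t : ℝ} (x : ℝ) (ht : 0 < t) :
    ‖(Complex.exp (α * Complex.I) *
        ∫ y in Set.Ioi (0:ℝ), G0 t x ((y : ℂ) * Complex.exp (α * Complex.I)) *
          F ((y : ℂ) * Complex.exp (α * Complex.I)))‖
      ≤ A * (2 * Real.sqrt (Real.pi * t))⁻¹ *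
        ∫ y in Set.Ioi (0:ℝ),
          Real.exp (-(Real.sin (2*α)/(4*t)) * y^2 - (Real.sin α * (|x|/(2*t) - B)) * y) := by
  have hs2 : 0 < Real.sin (2*α) :=
    Real.sin_pos_of_pos_of_lt_pi (by linarith [hα.1]) (by linarith [hα.2])
  have ha : 0 < Real.sin (2*α)/(4*t) := by positivity
  rw [norm_mul]
  have habs1 : ‖Complex.exp ((α:ℝ) * Complex.I)‖ = 1 := by
    simp [Complex.norm_exp]
  rw [habs1, one_mul]
  refine le_trans (norm_integral_le_integral_norm _) ?_
  rw [← MeasureTheory.integral_const_mul]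
  refine integral_mono_of_nonneg (ae_of_all _ fun y => norm_nonneg _)
    (((gauss_integrable ha (Real.sin α * (|x|/(2*t) - B))).integrableOn).const_mul _) ?_
  filter_upwards [ae_restrict_mem measurableSet_Ioi] with y hy
  simpa [mul_assoc] using
    pointwise_bound hα hA hbound x ht (le_of_lt hy)


private lemma hw_aux {t m B sα S2 : ℝ} (ht : 0 < t) (hsα : 0 < sα) (hS2 : 0 < S2) :
    sα * (m/(2*t) - B) / (2*(S2/(2*Real.sqrt t)))
      = (m / (2 * Real.sqrt t) - B * Real.sqrt t) * (sα / S2) := by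
  have hst : 0 < Real.sqrt t := Real.sqrt_pos.mpr ht
  field_simp
  ring_nf
  linear_combination m * (Real.sq_sqrt ht.le)

private lemma hval_aux {A sπ st sa m B t : ℝ} (h1 : sπ ≠ 0) (h2 : st ≠ 0) (h3 : sa ≠ 0)
    (h4 : m - 2*B*t ≠ 0) (htt : st * st = t) :
    A * (2*(sπ*st))⁻¹ * (sa*(m-2*B*t)/(2*t))⁻¹ = A*st/(sπ*sa*(m-2*B*t)) := by
  field_simp
  ring_nf
  linear_combination (-A) * htt

set_option maxHeartbeats 1000000 in
theorem Psi0_bound_and_initial_value {α : ℝ} (hα : α ∈ Set.Ioo 0 (Real.pi / 2))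
    {Ω : Set ℂ} (hΩ : IsOpen Ω) (hsub : sector α ⊆ Ω)
    {F : ℂ → ℂ} (hF : DifferentiableOn ℂ F Ω)
    {A B : ℝ} (hA : 0 ≤ A) (hB : 0 ≤ B)
    (hbound : ∀ z ∈ sector α, ‖F z‖ ≤ A * Real.exp (B * z.im)) :
    (∀ t x : ℝ, 0 < t → x ≠ 0 →
      ‖(Complex.exp (α * Complex.I) *
          ∫ y in Set.Ioi (0:ℝ), G0 t x ((y : ℂ) * Complex.exp (α * Complex.I)) *
            F ((y : ℂ) * Complex.exp (α * Complex.I)))‖ ≤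
        A * (Real.sqrt Real.pi / (2 * Real.sqrt (Real.sin (2 * α)))) *
          (Lam (((|x| / (2 * Real.sqrt t) - B * Real.sqrt t) *
            Real.sqrt (Real.tan α / 2) : ℝ) : ℂ)).re) ∧
    (∀ x : ℝ, x ≠ 0 →
      Tendsto (fun t : ℝ => Complex.exp (α * Complex.I) *
          ∫ y in Set.Ioi (0:ℝ), G0 t x ((y : ℂ) * Complex.exp (α * Complex.I)) *
            F ((y : ℂ) * Complex.exp (α * Complex.I)))
        (𝓝[>] 0) (𝓝 0)) := by
  have hsin : 0 < Real.sin α :=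
    Real.sin_pos_of_pos_of_lt_pi hα.1 (by linarith [hα.2, Real.pi_pos])
  have hcos : 0 < Real.cos α :=
    Real.cos_pos_of_mem_Ioo ⟨by linarith [hα.1, Real.pi_pos], hα.2⟩
  have hs2 : 0 < Real.sin (2*α) :=
    Real.sin_pos_of_pos_of_lt_pi (by linarith [hα.1]) (by linarith [hα.2])
  have hsπ : 0 < Real.sqrt Real.pi := Real.sqrt_pos.mpr Real.pi_pos
  have hss2 : 0 < Real.sqrt (Real.sin (2*α)) := Real.sqrt_pos.mpr hs2
  have h1π : (1:ℝ) ≤ Real.sqrt Real.pi := by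
    rw [show (1:ℝ) = Real.sqrt 1 by simp]
    exact Real.sqrt_le_sqrt (by linarith [Real.pi_gt_three])
  constructor
  · intro t x ht hx
    have hst : 0 < Real.sqrt t := Real.sqrt_pos.mpr ht
    have ha : 0 < Real.sin (2*α)/(4*t) := by positivity
    have htt : Real.sqrt t * Real.sqrt t = t := Real.mul_self_sqrt ht.le
    have hsqa : Real.sqrt (Real.sin (2*α)/(4*t))
        = Real.sqrt (Real.sin (2*α)) / (2*Real.sqrt t) := by
      rw [Real.sqrt_div hs2.le, show (4:ℝ)*t = (2*Real.sqrt t)^2 by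
            rw [mul_pow, Real.sq_sqrt ht.le]; norm_num,
        Real.sqrt_sq (by positivity)]
    have htan : Real.sqrt (Real.tan α / 2) = Real.sin α / Real.sqrt (Real.sin (2*α)) := by
      rw [show Real.tan α / 2 = (Real.sin α)^2 / Real.sin (2*α) by
            rw [Real.tan_eq_sin_div_cos, Real.sin_two_mul]; field_simp,
        Real.sqrt_div (sq_nonneg _), Real.sqrt_sq hsin.le]
    have hw : Real.sin α * (|x|/(2*t) - B) / (2*Real.sqrt (Real.sin (2*α)/(4*t)))
        = (|x| / (2 * Real.sqrt t) - B * Real.sqrt t) * Real.sqrt (Real.tan α / 2) := by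
      rw [hsqa, htan]
      exact hw_aux ht hsin hss2
    refine le_trans (key_bound hα hA hbound x ht) ?_
    rw [gauss_integral ha (Real.sin α * (|x|/(2*t) - B)), hw, lam_re]
    set W := (|x| / (2 * Real.sqrt t) - B * Real.sqrt t) * Real.sqrt (Real.tan α / 2) with hW
    have hI : 0 ≤ ∫ v in Set.Ioi W, Real.exp (-v^2) :=
      setIntegral_nonneg measurableSet_Ioi fun v _ => (Real.exp_pos _).le
    set I := ∫ v in Set.Ioi W, Real.exp (-v^2) with hIdef
    set E := Real.exp (W^2) with hEdef
    have hE : 0 < E := Real.exp_pos _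
    have key : A*E*I/(Real.sqrt Real.pi*Real.sqrt (Real.sin (2*α)))
        ≤ A*E*I/Real.sqrt (Real.sin (2*α)) := by
      apply div_le_div_of_nonneg_left (by positivity) hss2
      nlinarith
    refine le_trans (le_of_eq ?_) (le_trans key (le_of_eq ?_))
    · rw [hsqa, Real.sqrt_mul Real.pi_pos.le]
      field_simp
    · field_simp
  · intro x hx
    have hxabs : 0 < |x| := abs_pos.mpr hx
    have ht₀ : 0 < |x| / (2*B+2) := by positivity
    apply squeeze_zero_norm'
      (a := fun t => A * Real.sqrt t / (Real.sqrt Real.pi * Real.sin α * (|x| - 2*B*t)))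
    · filter_upwards [Ioo_mem_nhdsGT_of_mem (Set.left_mem_Ico.mpr ht₀)] with t htmem
      obtain ⟨ht, htlt⟩ := htmem
      have hxB : 0 < |x| - 2*B*t := by
        have h2 : t * (2*B+2) < |x| := (lt_div_iff₀ (by positivity)).mp htlt
        nlinarith
      have hb : 0 < Real.sin α * (|x|/(2*t) - B) := by
        apply mul_pos hsin
        rw [sub_pos, lt_div_iff₀ (by positivity)]
        nlinarith
      have ha : 0 < Real.sin (2*α)/(4*t) := by positivity
      refine le_trans (key_bound hα hA hbound x ht) ?_
      have hci : IntegrableOn (fun y : ℝ =>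
          Real.exp (-(Real.sin α * (|x|/(2*t) - B) * y))) (Set.Ioi 0) := by
        simpa [neg_mul] using exp_neg_integrableOn_Ioi 0 hb
      have hmono : (∫ y in Set.Ioi (0:ℝ),
            Real.exp (-(Real.sin (2*α)/(4*t)) * y^2 - (Real.sin α * (|x|/(2*t) - B)) * y))
          ≤ ∫ y in Set.Ioi (0:ℝ), Real.exp (-(Real.sin α * (|x|/(2*t) - B) * y)) := by
        refine setIntegral_mono_on
          (gauss_integrable ha (Real.sin α * (|x|/(2*t) - B))).integrableOn
          hci measurableSet_Ioi fun y hy => ?_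
        apply Real.exp_le_exp.mpr
        have hy' : 0 < y := mem_Ioi.mp hy
        nlinarith [sq_nonneg y]
      have hval : (∫ y in Set.Ioi (0:ℝ),
            Real.exp (-(Real.sin α * (|x|/(2*t) - B) * y)))
          = (Real.sin α * (|x|/(2*t) - B))⁻¹ := by
        have h2 := integral_comp_mul_left_Ioi (fun u => Real.exp (-u)) 0 hb
        simp only [mul_zero, smul_eq_mul] at h2
        rw [h2, integral_exp_neg_Ioi]
        norm_num
      refine le_trans (mul_le_mul_of_nonneg_left hmono (by positivity)) (le_of_eq ?_)
      rw [hval, show Real.sin α * (|x|/(2*t) - B) = Real.sin α*(|x| - 2*B*t)/(2*t) by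
          rw [eq_div_iff (by positivity : (2*t:ℝ) ≠ 0)]
          ring_nf
          rw [mul_assoc, mul_inv_cancel₀ ht.ne', mul_one], Real.sqrt_mul Real.pi_pos.le]
      exact hval_aux (ne_of_gt hsπ) (ne_of_gt (Real.sqrt_pos.mpr ht)) (ne_of_gt hsin)
        (ne_of_gt hxB) (Real.mul_self_sqrt ht.le)
    · have hc : Real.sqrt Real.pi * Real.sin α * |x| ≠ 0 := by positivity
      have h1 : Tendsto (fun t : ℝ => A * Real.sqrt t) (𝓝[>] (0:ℝ)) (𝓝 0) := by
        have h := (Real.continuous_sqrt.tendsto 0).const_mul A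
        simp only [Real.sqrt_zero, mul_zero] at h
        exact h.mono_left nhdsWithin_le_nhds
      have h2 : Tendsto (fun t : ℝ => Real.sqrt Real.pi * Real.sin α * (|x| - 2*B*t))
          (𝓝[>] (0:ℝ)) (𝓝 (Real.sqrt Real.pi * Real.sin α * |x|)) := by
        have hcont : Continuous fun t : ℝ => Real.sqrt Real.pi * Real.sin α * (|x| - 2*B*t) := by
          continuity
        have h := hcont.tendsto 0
        simp only [mul_zero, sub_zero] at h
        exact h.mono_left nhdsWithin_le_nhds
      have h3 := h1.div h2 hc
      rw [zero_div] at h3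
      exact h3
end
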